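/- Define backward-inductively V^u_{T+1} ≡ 0 and, for t ≤ T, w^u_t(π, γ1, γ2) = c̃_t(π, γ1, γ2) + Σ_z P^m_t(π, γ1, γ2)(z) V^u_{t+1}(F_t(π, γ1, γ2, z)) and V^u_t(π) = inf_{γ1} sup_{γ2} w^u_t(π, γ1, γ2), where c̃_t is trilinear in (π, γ1, γ2), P^m_t is trilinear, F_t is the Bayes update, and the extensions to sub-probability vectors are defined homogeneously. Then for every t ≤ T+1, V^u_t is continuous on the set of sub-probability vectors and satisfies V^u_t(απ) = α V^u_t(π) for all α ∈ [0,1]. -/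

import Mathlib

/-- Sub-probability vectors over a finite set. -/
def subProbSet (S : Type*) [Fintype S] : Set (S → ℝ) :=
  {p | (∀ s, 0 ≤ p s) ∧ ∑ s, p s ≤ 1}

/-- The stochastic prescriptions from private information `P` to actions `U`. -/
def prescSet (P U : Type*) [Fintype U] : Set (P → U → ℝ) :=
  {γ | ∀ p, (∀ u, 0 ≤ γ p u) ∧ ∑ u, γ p u = 1}

/-- Expected stage cost `c̃(π,γ1,γ2)` (trilinear in `(π,γ1,γ2)`). -/
def stageCost {S P1 P2 U1 U2 : Type*} [Fintype S] [Fintype U1] [Fintype U2]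
    (proj1 : S → P1) (proj2 : S → P2) (c : S → U1 → U2 → ℝ)
    (π : S → ℝ) (γ1 : P1 → U1 → ℝ) (γ2 : P2 → U2 → ℝ) : ℝ :=
  ∑ s, ∑ u1, ∑ u2, π s * γ1 (proj1 s) u1 * γ2 (proj2 s) u2 * c s u1 u2

/-- Unnormalized joint measure on `(z, s')` (trilinear in `(π,γ1,γ2)`). -/
def PjD {S S' P1 P2 U1 U2 Z : Type*} [Fintype S] [Fintype U1] [Fintype U2]
    (proj1 : S → P1) (proj2 : S → P2) (K : S → U1 → U2 → Z → S' → ℝ)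
    (π : S → ℝ) (γ1 : P1 → U1 → ℝ) (γ2 : P2 → U2 → ℝ) (z : Z) (s' : S') : ℝ :=
  ∑ s, ∑ u1, ∑ u2, π s * γ1 (proj1 s) u1 * γ2 (proj2 s) u2 * K s u1 u2 z s'

/-- Marginal `P^m` of `P^j` on `z`. -/
def PmD {S S' P1 P2 U1 U2 Z : Type*} [Fintype S] [Fintype S'] [Fintype U1]
    [Fintype U2]
    (proj1 : S → P1) (proj2 : S → P2) (K : S → U1 → U2 → Z → S' → ℝ)
    (π : S → ℝ) (γ1 : P1 → U1 → ℝ) (γ2 : P2 → U2 → ℝ) (z : Z) : ℝ :=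
  ∑ s', PjD proj1 proj2 K π γ1 γ2 z s'

section aux

lemma prescSet_eq (P U : Type*) [Fintype U] :
    prescSet P U = Set.pi Set.univ (fun _ : P => stdSimplex ℝ U) := by
  ext γ
  simp [prescSet, stdSimplex, Set.pi, forall_and]

lemma prescSet_compact (P U : Type*) [Fintype P] [Fintype U] :
    IsCompact (prescSet P U) := by
  rw [prescSet_eq]
  exact isCompact_univ_pi fun _ => isCompact_stdSimplex ℝ U

lemma prescSet_nonempty (P U : Type*) [Fintype U] [Nonempty U] :
    (prescSet P U).Nonempty := by
  refine ⟨fun _ u => (Fintype.card U : ℝ)⁻¹, fun p => ⟨fun u => by positivity, ?_⟩⟩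
  have : (Fintype.card U : ℝ) ≠ 0 := by
    simp [Fintype.card_ne_zero]
  simp [Finset.sum_const, this]

lemma subProb_compact (S : Type*) [Fintype S] : IsCompact (subProbSet S) := by
  have hsub : subProbSet S ⊆ Set.pi Set.univ (fun _ : S => Set.Icc (0:ℝ) 1) := by
    intro p hp s _
    refine ⟨hp.1 s, le_trans ?_ hp.2⟩
    exact Finset.single_le_sum (fun i _ => hp.1 i) (Finset.mem_univ s)
  refine IsCompact.of_isClosed_subset (isCompact_univ_pi fun _ => isCompact_Icc) ?_ hsub
  have h1 : IsClosed {p : S → ℝ | ∀ s, 0 ≤ p s} := by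
    have : {p : S → ℝ | ∀ s, 0 ≤ p s} = ⋂ s, {p : S → ℝ | 0 ≤ p s} := by
      ext p; simp
    rw [this]
    exact isClosed_iInter fun s => isClosed_le continuous_const (continuous_apply s)
  have h2 : IsClosed {p : S → ℝ | ∑ s, p s ≤ 1} :=
    isClosed_le (continuous_finset_sum _ fun i _ => continuous_apply i) continuous_const
  exact h1.inter h2

lemma zero_mem_subProb (S : Type*) [Fintype S] : (0 : S → ℝ) ∈ subProbSet S := by
  constructor <;> simp

lemma smul_mem_subProb {S : Type*} [Fintype S] {α : ℝ} (hα : α ∈ Set.Icc (0:ℝ) 1)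
    {π : S → ℝ} (hπ : π ∈ subProbSet S) : α • π ∈ subProbSet S := by
  obtain ⟨hα0, hα1⟩ := hα
  refine ⟨fun s => by have := hπ.1 s; simp [Pi.smul_apply]; positivity, ?_⟩
  simp only [Pi.smul_apply, smul_eq_mul, ← Finset.mul_sum]
  calc α * ∑ s, π s ≤ 1 * 1 := by
        apply mul_le_mul hα1 hπ.2 (Finset.sum_nonneg fun s _ => hπ.1 s) zero_le_one
    _ = 1 := by ring

lemma abs_ciSup_sub_le {ι : Type*} [Nonempty ι] {f g : ι → ℝ} {ε : ℝ}
    (hf : BddAbove (Set.range f)) (hg : BddAbove (Set.range g))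
    (h : ∀ i, |f i - g i| ≤ ε) : |(⨆ i, f i) - ⨆ i, g i| ≤ ε := by
  rw [abs_sub_le_iff]
  constructor
  · rw [sub_le_iff_le_add]
    refine ciSup_le fun i => ?_
    have h1 : f i ≤ g i + ε := by have := (abs_sub_le_iff.mp (h i)).1; linarith
    exact h1.trans (by have := le_ciSup hg i; linarith)
  · rw [sub_le_iff_le_add]
    refine ciSup_le fun i => ?_
    have h1 : g i ≤ f i + ε := by have := (abs_sub_le_iff.mp (h i)).2; linarith
    exact h1.trans (by have := le_ciSup hf i; linarith)

lemma abs_ciInf_sub_le {ι : Type*} [Nonempty ι] {f g : ι → ℝ} {ε : ℝ}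
    (hf : BddBelow (Set.range f)) (hg : BddBelow (Set.range g))
    (h : ∀ i, |f i - g i| ≤ ε) : |(⨅ i, f i) - ⨅ i, g i| ≤ ε := by
  rw [abs_sub_le_iff]
  constructor
  · have : (⨅ i, f i) - ε ≤ ⨅ i, g i := by
      refine le_ciInf fun i => ?_
      have h1 : f i ≤ g i + ε := by have := (abs_sub_le_iff.mp (h i)).1; linarith
      have h2 := ciInf_le hf i
      linarith
    linarith
  · have : (⨅ i, g i) - ε ≤ ⨅ i, f i := by
      refine le_ciInf fun i => ?_
      have h1 : g i ≤ f i + ε := by have := (abs_sub_le_iff.mp (h i)).2; linarith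
      have h2 := ciInf_le hg i
      linarith
    linarith

end aux

section minimax

lemma continuousOn_iInf_iSup {X A B : Type*} [MetricSpace X] [MetricSpace A]
    [MetricSpace B] [CompactSpace A] [CompactSpace B] [Nonempty A] [Nonempty B]
    {s : Set X} (hs : IsCompact s) {f : X → A → B → ℝ}
    (hf : ContinuousOn (fun q : X × A × B => f q.1 q.2.1 q.2.2)
      (s ×ˢ (Set.univ : Set (A × B)))) :
    ContinuousOn (fun x => ⨅ a : A, ⨆ b : B, f x a b) s := by
  have hcomp : IsCompact (s ×ˢ (Set.univ : Set (A × B))) := hs.prod isCompact_univ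
  have himg : IsCompact ((fun q : X × A × B => f q.1 q.2.1 q.2.2) ''
      (s ×ˢ (Set.univ : Set (A × B)))) := hcomp.image_of_continuousOn hf
  have hsubr : ∀ x ∈ s, ∀ a b, f x a b ∈ (fun q : X × A × B => f q.1 q.2.1 q.2.2) ''
      (s ×ˢ (Set.univ : Set (A × B))) := by
    intro x hx a b
    exact ⟨(x, a, b), ⟨hx, trivial⟩, rfl⟩
  have hbddA : ∀ x ∈ s, ∀ a : A, BddAbove (Set.range fun b => f x a b) := by
    intro x hx a
    refine himg.bddAbove.mono ?_
    rintro _ ⟨b, rfl⟩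
    exact hsubr x hx a b
  have hbddI : ∀ x ∈ s, BddBelow (Set.range fun a : A => ⨆ b : B, f x a b) := by
    intro x hx
    obtain ⟨m, hm⟩ := himg.bddBelow
    refine ⟨m, ?_⟩
    rintro _ ⟨a, rfl⟩
    obtain ⟨b⟩ : Nonempty B := inferInstance
    exact le_trans (hm (hsubr x hx a b)) (le_ciSup (hbddA x hx a) b)
  have huc := hcomp.uniformContinuousOn_of_continuous hf
  rw [Metric.uniformContinuousOn_iff] at huc
  rw [Metric.continuousOn_iff]
  intro x hx ε hε
  obtain ⟨δ, hδ, hδ'⟩ := huc (ε / 2) (by positivity)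
  refine ⟨δ, hδ, fun y hy hdist => ?_⟩
  have key : ∀ (a : A) (b : B), |f y a b - f x a b| ≤ ε / 2 := by
    intro a b
    have hd : dist ((y, a, b) : X × A × B) (x, a, b) < δ := by
      simp only [Prod.dist_eq, dist_self]
      simpa [max_eq_left dist_nonneg] using hdist
    have := hδ' (y, a, b) ⟨hy, trivial⟩ (x, a, b) ⟨hx, trivial⟩ hd
    rw [Real.dist_eq] at this
    exact this.le
  have hsup : ∀ a : A, |(⨆ b, f y a b) - ⨆ b, f x a b| ≤ ε / 2 := fun a =>
    abs_ciSup_sub_le (hbddA y hy a) (hbddA x hx a) (key a)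
  have hinf := abs_ciInf_sub_le (hbddI y hy) (hbddI x hx) hsup
  rw [Real.dist_eq]
  calc |(⨅ a, ⨆ b, f y a b) - ⨅ a, ⨆ b, f x a b| ≤ ε / 2 := hinf
    _ < ε := by linarith

end minimax

section algebra

variable {S S' P1 P2 U1 U2 Z : Type*} [Fintype S] [Fintype S'] [Fintype U1]
  [Fintype U2] [Fintype Z]
  (proj1 : S → P1) (proj2 : S → P2) (K : S → U1 → U2 → Z → S' → ℝ)
  {π : S → ℝ} {γ1 : P1 → U1 → ℝ} {γ2 : P2 → U2 → ℝ}

lemma contract_sum (hπ : ∀ s, 0 ≤ π s) (hγ1 : γ1 ∈ prescSet P1 U1)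
    (hγ2 : γ2 ∈ prescSet P2 U2) :
    ∑ s, ∑ u1, ∑ u2, π s * γ1 (proj1 s) u1 * γ2 (proj2 s) u2 = ∑ s, π s := by
  refine Finset.sum_congr rfl fun s _ => ?_
  calc ∑ u1, ∑ u2, π s * γ1 (proj1 s) u1 * γ2 (proj2 s) u2
      = ∑ u1, π s * γ1 (proj1 s) u1 * ∑ u2, γ2 (proj2 s) u2 := by
        refine Finset.sum_congr rfl fun u1 _ => ?_
        rw [Finset.mul_sum]
    _ = π s := by
        rw [(hγ2 (proj2 s)).2]
        simp only [mul_one, ← Finset.mul_sum, (hγ1 (proj1 s)).2]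

lemma PjD_nonneg (hπ : ∀ s, 0 ≤ π s) (hγ1 : γ1 ∈ prescSet P1 U1)
    (hγ2 : γ2 ∈ prescSet P2 U2) (hK : ∀ s u1 u2 z s', 0 ≤ K s u1 u2 z s')
    (z : Z) (s' : S') : 0 ≤ PjD proj1 proj2 K π γ1 γ2 z s' := by
  refine Finset.sum_nonneg fun s _ => Finset.sum_nonneg fun u1 _ =>
    Finset.sum_nonneg fun u2 _ => ?_
  have := hπ s; have := (hγ1 (proj1 s)).1 u1; have := (hγ2 (proj2 s)).1 u2
  have := hK s u1 u2 z s'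
  positivity

lemma PmD_nonneg (hπ : ∀ s, 0 ≤ π s) (hγ1 : γ1 ∈ prescSet P1 U1)
    (hγ2 : γ2 ∈ prescSet P2 U2) (hK : ∀ s u1 u2 z s', 0 ≤ K s u1 u2 z s')
    (z : Z) : 0 ≤ PmD proj1 proj2 K π γ1 γ2 z :=
  Finset.sum_nonneg fun s' _ => PjD_nonneg proj1 proj2 K hπ hγ1 hγ2 hK z s'

lemma PmD_eq (z : Z) : PmD proj1 proj2 K π γ1 γ2 z =
    ∑ s, ∑ u1, ∑ u2, π s * γ1 (proj1 s) u1 * γ2 (proj2 s) u2 *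
      (∑ s', K s u1 u2 z s') := by
  unfold PmD PjD
  rw [Finset.sum_comm]
  refine Finset.sum_congr rfl fun s _ => ?_
  rw [Finset.sum_comm]
  refine Finset.sum_congr rfl fun u1 _ => ?_
  rw [Finset.sum_comm]
  refine Finset.sum_congr rfl fun u2 _ => ?_
  rw [Finset.mul_sum]

lemma PmD_le_one (hπ : π ∈ subProbSet S) (hγ1 : γ1 ∈ prescSet P1 U1)
    (hγ2 : γ2 ∈ prescSet P2 U2) (hK : ∀ s u1 u2 z s', 0 ≤ K s u1 u2 z s')
    (hKsum : ∀ s u1 u2, ∑ z, ∑ s', K s u1 u2 z s' = 1)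
    (z : Z) : PmD proj1 proj2 K π γ1 γ2 z ≤ 1 := by
  rw [PmD_eq]
  have hw : ∀ s u1 u2, (∑ s', K s u1 u2 z s') ≤ 1 := by
    intro s u1 u2
    rw [← hKsum s u1 u2]
    exact Finset.single_le_sum
      (fun z' _ => Finset.sum_nonneg fun s' _ => hK s u1 u2 z' s')
      (Finset.mem_univ z)
  calc ∑ s, ∑ u1, ∑ u2, π s * γ1 (proj1 s) u1 * γ2 (proj2 s) u2 *
        (∑ s', K s u1 u2 z s')
      ≤ ∑ s, ∑ u1, ∑ u2, π s * γ1 (proj1 s) u1 * γ2 (proj2 s) u2 := by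
        refine Finset.sum_le_sum fun s _ => Finset.sum_le_sum fun u1 _ =>
          Finset.sum_le_sum fun u2 _ => ?_
        have h0 : 0 ≤ π s * γ1 (proj1 s) u1 * γ2 (proj2 s) u2 := by
          have := hπ.1 s; have := (hγ1 (proj1 s)).1 u1
          have := (hγ2 (proj2 s)).1 u2
          positivity
        exact mul_le_of_le_one_right h0 (hw s u1 u2)
    _ = ∑ s, π s := contract_sum proj1 proj2 hπ.1 hγ1 hγ2
    _ ≤ 1 := hπ.2

lemma PjD_mem_subProb (hπ : π ∈ subProbSet S) (hγ1 : γ1 ∈ prescSet P1 U1)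
    (hγ2 : γ2 ∈ prescSet P2 U2) (hK : ∀ s u1 u2 z s', 0 ≤ K s u1 u2 z s')
    (hKsum : ∀ s u1 u2, ∑ z, ∑ s', K s u1 u2 z s' = 1) (z : Z) :
    (fun s' => PjD proj1 proj2 K π γ1 γ2 z s') ∈ subProbSet S' :=
  ⟨fun s' => PjD_nonneg proj1 proj2 K hπ.1 hγ1 hγ2 hK z s', PmD_le_one proj1 proj2 K hπ hγ1 hγ2 hK hKsum z⟩

lemma stageCost_smul {c : S → U1 → U2 → ℝ} (α : ℝ) :
    stageCost proj1 proj2 c (α • π) γ1 γ2 = α * stageCost proj1 proj2 c π γ1 γ2 := by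
  unfold stageCost
  simp only [Finset.mul_sum]
  refine Finset.sum_congr rfl fun s _ => Finset.sum_congr rfl fun u1 _ =>
    Finset.sum_congr rfl fun u2 _ => ?_
  simp only [Pi.smul_apply, smul_eq_mul]
  ring

lemma PjD_smul (α : ℝ) (z : Z) :
    (fun s' => PjD proj1 proj2 K (α • π) γ1 γ2 z s') =
      α • (fun s' => PjD proj1 proj2 K π γ1 γ2 z s') := by
  funext s'
  simp only [Pi.smul_apply, smul_eq_mul]
  unfold PjD
  simp only [Finset.mul_sum]
  refine Finset.sum_congr rfl fun s _ => Finset.sum_congr rfl fun u1 _ =>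
    Finset.sum_congr rfl fun u2 _ => ?_
  simp only [Pi.smul_apply, smul_eq_mul]
  ring

end algebra

/-- Backward induction for the (upper) value functions of the expanded virtual
game: with `V_{T+1} ≡ 0` and
`V_t(π) = inf_{γ1} sup_{γ2} [c̃_t(π,γ1,γ2) + Σ_z P^m_t(π,γ1,γ2)(z) V_{t+1}(F_t(π,γ1,γ2,z))]`
(`F_t` the Bayes update, extended homogeneously with `F_t(0,·) = 0`), every `V_t`
is continuous on the sub-probability vectors and homogeneous of degree one. -/
theorem stmt_9
    (T : ℕ) (S P1 P2 U1 U2 Z : ℕ → Type)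
    [∀ t, Fintype (S t)] [∀ t, Fintype (P1 t)] [∀ t, Fintype (P2 t)]
    [∀ t, Fintype (U1 t)] [∀ t, Fintype (U2 t)] [∀ t, Fintype (Z t)]
    [∀ t, Nonempty (U1 t)] [∀ t, Nonempty (U2 t)]
    (proj1 : ∀ t, S t → P1 t) (proj2 : ∀ t, S t → P2 t)
    (c : ∀ t, S t → U1 t → U2 t → ℝ)
    (K : ∀ t, S t → U1 t → U2 t → Z t → S (t + 1) → ℝ)
    (hK : ∀ t s u1 u2 z s', 0 ≤ K t s u1 u2 z s')
    (hKsum : ∀ t s u1 u2, ∑ z, ∑ s', K t s u1 u2 z s' = 1)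
    (F : ∀ t, (S t → ℝ) → (P1 t → U1 t → ℝ) → (P2 t → U2 t → ℝ) → Z t →
      (S (t + 1) → ℝ))
    (hFsub : ∀ t π γ1 γ2 z, F t π γ1 γ2 z ∈ subProbSet (S (t + 1)))
    (hFzero : ∀ t γ1 γ2 z, F t 0 γ1 γ2 z = 0)
    (hFbayes : ∀ t π γ1 γ2 z,
      0 < PmD (proj1 t) (proj2 t) (K t) π γ1 γ2 z →
      F t π γ1 γ2 z =
        (PmD (proj1 t) (proj2 t) (K t) π γ1 γ2 z)⁻¹ •
          fun s' => PjD (proj1 t) (proj2 t) (K t) π γ1 γ2 z s')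
    (V : ∀ t, (S t → ℝ) → ℝ)
    (hVT : ∀ μ, V (T + 1) μ = 0)
    (hV : ∀ t ≤ T, ∀ π ∈ subProbSet (S t),
      V t π =
        ⨅ γ1 : prescSet (P1 t) (U1 t), ⨆ γ2 : prescSet (P2 t) (U2 t),
          (stageCost (proj1 t) (proj2 t) (c t) π γ1 γ2 +
            ∑ z, PmD (proj1 t) (proj2 t) (K t) π γ1 γ2 z *
              V (t + 1) (F t π γ1 γ2 z))) :
    ∀ t ≤ T + 1,
      ContinuousOn (V t) (subProbSet (S t)) ∧
      ∀ α ∈ Set.Icc (0:ℝ) 1, ∀ π ∈ subProbSet (S t),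
        V t (α • π) = α * V t π := by
  suffices H : ∀ d, ∀ t, t + d = T + 1 →
      (ContinuousOn (V t) (subProbSet (S t)) ∧
      ∀ α ∈ Set.Icc (0:ℝ) 1, ∀ π ∈ subProbSet (S t),
        V t (α • π) = α * V t π) by
    intro t ht
    exact H (T + 1 - t) t (by omega)
  intro d
  induction d with
  | zero =>
    intro t ht
    have h : t = T + 1 := by omega
    subst h
    refine ⟨continuousOn_const.congr fun x _ => hVT x, ?_⟩
    intro α _ π _
    simp [hVT]
  | succ d ih =>
    intro t ht
    have htT : t ≤ T := by omega
    obtain ⟨IHc, IHh⟩ := ih (t + 1) (by omega)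
    -- key identity : Pm * V (F) = V (Pj)
    have key : ∀ π ∈ subProbSet (S t), ∀ γ1 ∈ prescSet (P1 t) (U1 t),
        ∀ γ2 ∈ prescSet (P2 t) (U2 t), ∀ z,
        PmD (proj1 t) (proj2 t) (K t) π γ1 γ2 z * V (t + 1) (F t π γ1 γ2 z)
          = V (t + 1) (fun s' => PjD (proj1 t) (proj2 t) (K t) π γ1 γ2 z s') := by
      intro π hπ γ1 hγ1 γ2 hγ2 z
      have h0 := PmD_nonneg (proj1 t) (proj2 t) (K t) hπ.1 hγ1 hγ2 (hK t) z
      rcases eq_or_lt_of_le h0 with hP0 | hPpos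
      · have hPj0 : (fun s' => PjD (proj1 t) (proj2 t) (K t) π γ1 γ2 z s')
            = (0 : S (t + 1) → ℝ) := by
          funext s'
          exact (Finset.sum_eq_zero_iff_of_nonneg
            (fun s' _ => PjD_nonneg (proj1 t) (proj2 t) (K t) hπ.1 hγ1 hγ2 (hK t) z s')).mp hP0.symm
            s' (Finset.mem_univ s')
        have hz := IHh 0 (by constructor <;> norm_num) 0 (zero_mem_subProb _)
        rw [smul_zero, zero_mul] at hz
        rw [← hP0, hPj0, zero_mul, hz]
      · have hle := PmD_le_one (proj1 t) (proj2 t) (K t) hπ hγ1 hγ2 (hK t) (hKsum t) z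
        have hhom := IHh (PmD (proj1 t) (proj2 t) (K t) π γ1 γ2 z)
          ⟨le_of_lt hPpos, hle⟩ (F t π γ1 γ2 z) (hFsub t π γ1 γ2 z)
        rw [← hhom]
        congr 1
        rw [hFbayes t π γ1 γ2 z hPpos, smul_smul,
          mul_inv_cancel₀ (ne_of_gt hPpos), one_smul]
    -- the reduced value expression
    set W : (S t → ℝ) → (P1 t → U1 t → ℝ) → (P2 t → U2 t → ℝ) → ℝ :=
      fun π γ1 γ2 => stageCost (proj1 t) (proj2 t) (c t) π γ1 γ2 +
        ∑ z, V (t + 1) (fun s' => PjD (proj1 t) (proj2 t) (K t) π γ1 γ2 z s')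
      with hWdef
    have hVeq : ∀ π ∈ subProbSet (S t),
        V t π = ⨅ γ1 : prescSet (P1 t) (U1 t), ⨆ γ2 : prescSet (P2 t) (U2 t),
          W π γ1 γ2 := by
      intro π hπ
      rw [hV t htT π hπ]
      refine iInf_congr fun γ1 => iSup_congr fun γ2 => ?_
      rw [hWdef]
      congr 1
      exact Finset.sum_congr rfl fun z _ => key π hπ γ1 γ1.2 γ2 γ2.2 z
    haveI hA : CompactSpace (prescSet (P1 t) (U1 t)) :=
      isCompact_iff_compactSpace.mp (prescSet_compact _ _)
    haveI hB : CompactSpace (prescSet (P2 t) (U2 t)) :=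
      isCompact_iff_compactSpace.mp (prescSet_compact _ _)
    haveI hAne : Nonempty (prescSet (P1 t) (U1 t)) :=
      (prescSet_nonempty _ _).to_subtype
    haveI hBne : Nonempty (prescSet (P2 t) (U2 t)) :=
      (prescSet_nonempty _ _).to_subtype
    constructor
    · -- continuity
      have hsc : Continuous (fun q : (S t → ℝ) × (prescSet (P1 t) (U1 t)) ×
          (prescSet (P2 t) (U2 t)) =>
          stageCost (proj1 t) (proj2 t) (c t) q.1 q.2.1.val q.2.2.val) := by
        unfold stageCost
        apply continuous_finset_sum; intro s _
        apply continuous_finset_sum; intro u1 _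
        apply continuous_finset_sum; intro u2 _
        exact ((((continuous_apply s).comp continuous_fst).mul
          ((continuous_apply u1).comp ((continuous_apply (proj1 t s)).comp
            (continuous_subtype_val.comp (continuous_fst.comp continuous_snd))))).mul
          ((continuous_apply u2).comp ((continuous_apply (proj2 t s)).comp
            (continuous_subtype_val.comp (continuous_snd.comp continuous_snd))))).mul
          continuous_const
      have hWcont : ContinuousOn (fun q : (S t → ℝ) × (prescSet (P1 t) (U1 t)) ×
          (prescSet (P2 t) (U2 t)) => W q.1 q.2.1.val q.2.2.val)
          ((subProbSet (S t)) ×ˢ (Set.univ :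
            Set ((prescSet (P1 t) (U1 t)) × (prescSet (P2 t) (U2 t))))) := by
        rw [hWdef]
        refine (hsc.continuousOn).add ?_
        refine continuousOn_finset_sum _ fun z _ => ?_
        have hg : Continuous (fun q : (S t → ℝ) × (prescSet (P1 t) (U1 t)) ×
            (prescSet (P2 t) (U2 t)) =>
            (fun s' => PjD (proj1 t) (proj2 t) (K t) q.1 q.2.1.val q.2.2.val z s')) := by
          refine continuous_pi fun s' => ?_
          unfold PjD
          apply continuous_finset_sum; intro s _
          apply continuous_finset_sum; intro u1 _
          apply continuous_finset_sum; intro u2 _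
          exact ((((continuous_apply s).comp continuous_fst).mul
            ((continuous_apply u1).comp ((continuous_apply (proj1 t s)).comp
              (continuous_subtype_val.comp (continuous_fst.comp continuous_snd))))).mul
            ((continuous_apply u2).comp ((continuous_apply (proj2 t s)).comp
              (continuous_subtype_val.comp (continuous_snd.comp continuous_snd))))).mul
            continuous_const
        refine ContinuousOn.comp IHc hg.continuousOn ?_
        rintro q ⟨hq1, -⟩
        exact PjD_mem_subProb (proj1 t) (proj2 t) (K t) hq1 q.2.1.2 q.2.2.2 (hK t) (hKsum t) z
      have := continuousOn_iInf_iSup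
        (f := fun π (γ1 : prescSet (P1 t) (U1 t)) (γ2 : prescSet (P2 t) (U2 t)) =>
          W π γ1.val γ2.val)
        (subProb_compact (S t)) hWcont
      exact this.congr fun π hπ => hVeq π hπ
    · -- homogeneity
      intro α hα π hπ
      have hsm := smul_mem_subProb hα hπ
      rw [hVeq _ hsm, hVeq _ hπ]
      have hW : ∀ (γ1 : prescSet (P1 t) (U1 t)) (γ2 : prescSet (P2 t) (U2 t)),
          W (α • π) γ1 γ2 = α * W π γ1 γ2 := by
        intro γ1 γ2
        rw [hWdef]
        simp only
        rw [stageCost_smul]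
        have hz : ∀ z, V (t + 1)
            (fun s' => PjD (proj1 t) (proj2 t) (K t) (α • π) γ1.val γ2.val z s')
            = α * V (t + 1)
              (fun s' => PjD (proj1 t) (proj2 t) (K t) π γ1.val γ2.val z s') := by
          intro z
          rw [PjD_smul]
          exact IHh α hα _ (PjD_mem_subProb (proj1 t) (proj2 t) (K t) hπ γ1.2 γ2.2 (hK t) (hKsum t) z)
        rw [Finset.sum_congr rfl fun z _ => hz z, ← Finset.mul_sum, ← mul_add]
      calc (⨅ γ1 : prescSet (P1 t) (U1 t), ⨆ γ2 : prescSet (P2 t) (U2 t),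
            W (α • π) γ1 γ2)
          = ⨅ γ1 : prescSet (P1 t) (U1 t), ⨆ γ2 : prescSet (P2 t) (U2 t),
            α * W π γ1 γ2 :=
          iInf_congr fun γ1 => iSup_congr fun γ2 => hW γ1 γ2
        _ = ⨅ γ1 : prescSet (P1 t) (U1 t),
            α * ⨆ γ2 : prescSet (P2 t) (U2 t), W π γ1 γ2 :=
          iInf_congr fun γ1 => (Real.mul_iSup_of_nonneg hα.1 _).symm
        _ = α * ⨅ γ1 : prescSet (P1 t) (U1 t),
            ⨆ γ2 : prescSet (P2 t) (U2 t), W π γ1 γ2 :=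
          (Real.mul_iInf_of_nonneg hα.1 _).symm
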